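/- Tvd-variety is bounded above by 1 − 1/|C|: for any joint distribution D on a finite set C × P, V^{tvd}(D) ≤ 1 − 1/|C|. -/

import Mathlib

open Finset

/-- The Tvd-variety of a joint distribution `D` on `C × P`. -/
noncomputable def tvdVariety {C P : Type*} [Fintype C] [Fintype P]
    (D : C → P → ℝ) : ℝ :=
  (1 / 2) * ∑ c : C, ∑ p : P,
    |D c p - (1 / (Fintype.card C : ℝ)) * ∑ c' : C, D c' p|

/-- The Tvd-variety is bounded above by `1 − 1/|C|`. -/
lemma sum_abs_sub_avg_le {C : Type*} [Fintype C] [Nonempty C]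
    (f : C → ℝ) (hf : ∀ c, 0 ≤ f c) :
    ∑ c : C, |f c - (1 / (Fintype.card C : ℝ)) * ∑ c', f c'| ≤
      2 * (1 - 1 / (Fintype.card C : ℝ)) * ∑ c', f c' := by
  classical
  set n : ℝ := (Fintype.card C : ℝ) with hn
  have hnpos : (0 : ℝ) < n := by
    simp [hn, Fintype.card_pos]
  set S : ℝ := ∑ c', f c' with hS
  set m : ℝ := (1 / n) * S with hm
  have hsum0 : ∑ c : C, (f c - m) = 0 := by
    rw [Finset.sum_sub_distrib, Finset.sum_const, Finset.card_univ, hm]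
    field_simp
    rw [nsmul_eq_mul, ← hn, hS, mul_div_assoc', mul_div_cancel_left₀ _ hnpos.ne', sub_self]
  have habs : ∀ x : ℝ, |x| = 2 * max (-x) 0 + x := by
    intro x
    rcases le_or_gt 0 x with h | h
    · rw [abs_of_nonneg h, max_eq_right (by linarith)]; ring
    · rw [abs_of_neg h, max_eq_left (by linarith)]; ring
  have key : ∑ c : C, |f c - m| = 2 * ∑ c : C, max (m - f c) 0 := by
    have h : ∑ c : C, |f c - m| = ∑ c : C, (2 * max (m - f c) 0 + (f c - m)) := by
      refine Finset.sum_congr rfl fun c _ => ?_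
      rw [habs (f c - m), neg_sub]
    rw [h, Finset.sum_add_distrib, hsum0, add_zero, ← Finset.mul_sum]
  -- find a c0 with f c0 ≥ m
  obtain ⟨c0, hc0⟩ := Finset.exists_max_image Finset.univ f ⟨Classical.arbitrary C, Finset.mem_univ _⟩
  have hc0m : m ≤ f c0 := by
    have hS_le : S ≤ n * f c0 := by
      rw [hS, hn]
      calc ∑ c', f c' ≤ ∑ _c' : C, f c0 :=
            Finset.sum_le_sum fun c _ => hc0.2 c (Finset.mem_univ c)
        _ = (Fintype.card C : ℝ) * f c0 := by
            rw [Finset.sum_const, Finset.card_univ, nsmul_eq_mul]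
    rw [hm]
    rw [div_mul_eq_mul_div, one_mul, div_le_iff₀ hnpos, mul_comm]
    exact hS_le
  have hmnn : 0 ≤ m := by
    have : 0 ≤ S := Finset.sum_nonneg fun c _ => hf c
    positivity
  have hbound : ∑ c : C, max (m - f c) 0 ≤ (n - 1) * m := by
    have h1 : ∑ c : C, max (m - f c) 0
        = ∑ c ∈ Finset.univ.erase c0, max (m - f c) 0 := by
      rw [← Finset.sum_erase_add _ _ (Finset.mem_univ c0)]
      have : max (m - f c0) 0 = 0 := max_eq_right (by linarith)
      rw [this, add_zero]
    rw [h1]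
    calc ∑ c ∈ Finset.univ.erase c0, max (m - f c) 0
        ≤ ∑ _c ∈ Finset.univ.erase c0, m :=
          Finset.sum_le_sum fun c _ => by
            have := hf c
            rcases le_or_gt (m - f c) 0 with h | h
            · rw [max_eq_right h]; exact hmnn
            · rw [max_eq_left h.le]; linarith
      _ = ((Finset.univ.erase c0).card : ℝ) * m := by
          rw [Finset.sum_const, nsmul_eq_mul]
      _ = (n - 1) * m := by
          rw [Finset.card_erase_of_mem (Finset.mem_univ c0), Finset.card_univ]
          have h1 : 1 ≤ Fintype.card C := Fintype.card_pos
          push_cast [h1]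
          ring_nf
          rw [hn]; ring
  calc ∑ c : C, |f c - m| = 2 * ∑ c : C, max (m - f c) 0 := key
    _ ≤ 2 * ((n - 1) * m) := by linarith
    _ = 2 * (1 - 1 / n) * S := by
        rw [hm]; field_simp

theorem tvdVariety_le
    {C P : Type*} [Fintype C] [Fintype P] [Nonempty C] [Nonempty P]
    (D : C → P → ℝ)
    (hnn : ∀ c p, 0 ≤ D c p) (hsum : ∑ c : C, ∑ p : P, D c p = 1) :
    tvdVariety D ≤ 1 - 1 / (Fintype.card C : ℝ) := by
  unfold tvdVariety
  rw [Finset.sum_comm]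
  have hstep : ∑ p : P, ∑ c : C, |D c p - (1 / (Fintype.card C : ℝ)) * ∑ c' : C, D c' p|
      ≤ ∑ p : P, 2 * (1 - 1 / (Fintype.card C : ℝ)) * ∑ c' : C, D c' p :=
    Finset.sum_le_sum fun p _ => sum_abs_sub_avg_le (fun c => D c p) (fun c => hnn c p)
  have htot : ∑ p : P, ∑ c' : C, D c' p = 1 := by rw [Finset.sum_comm]; exact hsum
  calc (1 / 2) * ∑ p : P, ∑ c : C, |D c p - (1 / (Fintype.card C : ℝ)) * ∑ c' : C, D c' p|
      ≤ (1 / 2) * ∑ p : P, 2 * (1 - 1 / (Fintype.card C : ℝ)) * ∑ c' : C, D c' p := by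
        linarith
    _ = (1 - 1 / (Fintype.card C : ℝ)) * ∑ p : P, ∑ c' : C, D c' p := by
        rw [← Finset.mul_sum]; ring
    _ = 1 - 1 / (Fintype.card C : ℝ) := by rw [htot, mul_one]
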